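/- Let $\gamma$ be a capacity on an algebra $\mathcal{A}$ and $P$ a finitely additive probability on $\mathcal{A}$ such that for sequences $(A_n)$ in $\mathcal{A}$: $P(A_n) \to 0$ if and only if $\gamma(A_n) \to 0$. Then $\gamma$ satisfies the following partition property: for every $B \in \mathcal{A}$ with $\gamma(B) > 0$ there exists $N \in \mathbb{N}$ such that every partition of $\Omega$ into at least $N$ sets from $\mathcal{A}$ contains a set $A$ with $\gamma(B \setminus A) > \gamma(A)$. -/

import Mathlib

open Filter

/-- An algebra of subsets of `Ω`. -/
structure SetAlgebra (Ω : Type*) where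
  sets : Set (Set Ω)
  empty_mem : ∅ ∈ sets
  compl_mem : ∀ A ∈ sets, Aᶜ ∈ sets
  union_mem : ∀ A ∈ sets, ∀ B ∈ sets, A ∪ B ∈ sets

/-- A finitely additive probability on an algebra of sets. -/
structure FinAddProb {Ω : Type*} (𝒜 : SetAlgebra Ω) where
  toFun : Set Ω → ℝ
  nonneg : ∀ A, 0 ≤ toFun A
  empty : toFun ∅ = 0
  univ : toFun Set.univ = 1
  mono : ∀ A ∈ 𝒜.sets, ∀ B ∈ 𝒜.sets, A ⊆ B → toFun A ≤ toFun B
  additive : ∀ A ∈ 𝒜.sets, ∀ B ∈ 𝒜.sets, Disjoint A B → toFun (A ∪ B) = toFun A + toFun B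

lemma sum_partition {Ω : Type*} {𝒜 : SetAlgebra Ω} (P : FinAddProb 𝒜)
    (π : Finset (Set Ω)) (hmem : ∀ A ∈ π, A ∈ 𝒜.sets)
    (hdisj : ∀ A ∈ π, ∀ A' ∈ π, A ≠ A' → Disjoint A A') :
    (⋃ A ∈ π, A) ∈ 𝒜.sets ∧ P.toFun (⋃ A ∈ π, A) = ∑ A ∈ π, P.toFun A := by
  classical
  induction π using Finset.induction_on with
  | empty => simp [𝒜.empty_mem, P.empty]
  | insert _ _ ha =>
    rename_i a π ih
    have hmem' : ∀ A ∈ π, A ∈ 𝒜.sets := fun A hA => hmem A (Finset.mem_insert_of_mem hA)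
    have hdisj' : ∀ A ∈ π, ∀ A' ∈ π, A ≠ A' → Disjoint A A' := fun A hA A' hA' h =>
      hdisj A (Finset.mem_insert_of_mem hA) A' (Finset.mem_insert_of_mem hA') h
    obtain ⟨hU, hsum⟩ := ih hmem' hdisj'
    have haA : a ∈ 𝒜.sets := hmem a (Finset.mem_insert_self a π)
    have hd : Disjoint a (⋃ A ∈ π, A) := by
      rw [Set.disjoint_iUnion₂_right]
      intro x hx
      exact hdisj a (Finset.mem_insert_self a π) x (Finset.mem_insert_of_mem hx)
        (fun h => ha (h ▸ hx))
    rw [Finset.set_biUnion_insert]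
    refine ⟨𝒜.union_mem a haA _ hU, ?_⟩
    rw [P.additive a haA _ hU hd, hsum, Finset.sum_insert ha]

/-- If the `γ`-null sequences coincide with the `P`-null sequences for a
finitely additive probability `P`, then `γ` satisfies the partition property: for every
`B ∈ 𝒜` with `γ B > 0` there is `N` such that every `𝒜`-measurable partition of `Ω` of
size at least `N` contains a set `A` with `γ (B \ A) > γ A`. -/
theorem partition_property_of_control {Ω : Type*} (𝒜 : SetAlgebra Ω)
    (γ : Set Ω → ℝ) (hγ0 : γ ∅ = 0) (hγ1 : γ Set.univ = 1)
    (hmono : ∀ A ∈ 𝒜.sets, ∀ B ∈ 𝒜.sets, A ⊆ B → γ A ≤ γ B)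
    (P : FinAddProb 𝒜)
    (hcontrol : ∀ A : ℕ → Set Ω, (∀ n, A n ∈ 𝒜.sets) →
      (Tendsto (fun n => P.toFun (A n)) atTop (nhds 0) ↔
        Tendsto (fun n => γ (A n)) atTop (nhds 0))) :
    ∀ B ∈ 𝒜.sets, 0 < γ B →
      ∃ N : ℕ, ∀ π : Finset (Set Ω),
        (∀ A ∈ π, A ∈ 𝒜.sets) →
        (∀ A ∈ π, ∀ A' ∈ π, A ≠ A' → Disjoint A A') →
        (⋃ A ∈ π, A) = Set.univ →
        N ≤ π.card →
        ∃ A ∈ π, γ A < γ (B \ A) := by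
  intro B hB hγB
  have hinter : ∀ A ∈ 𝒜.sets, ∀ C ∈ 𝒜.sets, A ∩ C ∈ 𝒜.sets := by
    intro A hA C hC
    have : A ∩ C = (Aᶜ ∪ Cᶜ)ᶜ := by rw [Set.compl_union, compl_compl, compl_compl]
    rw [this]
    exact 𝒜.compl_mem _ (𝒜.union_mem _ (𝒜.compl_mem _ hA) _ (𝒜.compl_mem _ hC))
  have hdiffmem : ∀ A ∈ 𝒜.sets, B \ A ∈ 𝒜.sets := by
    intro A hA
    rw [Set.diff_eq]
    exact hinter B hB _ (𝒜.compl_mem _ hA)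
  by_contra hcon
  push_neg at hcon
  -- for each n, get a partition of card ≥ n+1 where γ (B \ A) ≤ γ A for all A
  have key : ∀ n : ℕ, ∃ A ∈ 𝒜.sets, P.toFun A ≤ 1 / (n + 1 : ℝ) ∧ γ (B \ A) ≤ γ A := by
    intro n
    obtain ⟨π, hπmem, hπdisj, hπcover, hπcard, hπbad⟩ := hcon (n + 1)
    have hsum := (sum_partition P π hπmem hπdisj).2
    rw [hπcover, P.univ] at hsum
    have hne : π.Nonempty := Finset.card_pos.mp (by omega)
    obtain ⟨a, ha, hamin⟩ := π.exists_min_image P.toFun hne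
    refine ⟨a, hπmem a ha, ?_, hπbad a ha⟩
    have hcard : (π.card : ℝ) * P.toFun a ≤ 1 := by
      calc (π.card : ℝ) * P.toFun a = ∑ _A ∈ π, P.toFun a := by
            rw [Finset.sum_const, nsmul_eq_mul]
        _ ≤ ∑ A ∈ π, P.toFun A := Finset.sum_le_sum fun A hA => hamin A hA
        _ = 1 := hsum.symm
    have hn1 : (0 : ℝ) < n + 1 := by positivity
    have hcardpos : (n + 1 : ℝ) ≤ (π.card : ℝ) := by exact_mod_cast hπcard
    rw [le_div_iff₀ hn1]
    calc P.toFun a * (n + 1) ≤ P.toFun a * π.card :=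
          mul_le_mul_of_nonneg_left hcardpos (P.nonneg a)
      _ = (π.card : ℝ) * P.toFun a := mul_comm _ _
      _ ≤ 1 := hcard
  choose A hAmem hAsmall hAbad using key
  have hPA0 : Tendsto (fun n => P.toFun (A n)) atTop (nhds 0) := by
    refine tendsto_of_tendsto_of_tendsto_of_le_of_le tendsto_const_nhds
      tendsto_one_div_add_atTop_nhds_zero_nat (fun n => P.nonneg _) (fun n => ?_)
    simpa using hAsmall n
  have hγA0 : Tendsto (fun n => γ (A n)) atTop (nhds 0) := (hcontrol A hAmem).mp hPA0
  have hγdiff0 : Tendsto (fun n => γ (B \ A n)) atTop (nhds 0) := by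
    refine tendsto_of_tendsto_of_tendsto_of_le_of_le tendsto_const_nhds hγA0
      (fun n => ?_) (fun n => hAbad n)
    have := hmono ∅ 𝒜.empty_mem (B \ A n) (hdiffmem _ (hAmem n)) (Set.empty_subset _)
    simpa [hγ0] using this
  have hPdiff0 : Tendsto (fun n => P.toFun (B \ A n)) atTop (nhds 0) :=
    (hcontrol (fun n => B \ A n) (fun n => hdiffmem _ (hAmem n))).mpr hγdiff0
  have hPB_le : P.toFun B ≤ 0 := by
    have hsplit : ∀ n, P.toFun B ≤ P.toFun (B \ A n) + P.toFun (A n) := by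
      intro n
      have h1 : P.toFun B = P.toFun (B \ A n) + P.toFun (B ∩ A n) := by
        have hd : Disjoint (B \ A n) (B ∩ A n) :=
          Set.disjoint_sdiff_left.mono_right Set.inter_subset_right
        have := P.additive (B \ A n) (hdiffmem _ (hAmem n)) (B ∩ A n)
          (hinter B hB _ (hAmem n)) hd
        rw [Set.diff_union_inter] at this
        exact this
      have h2 : P.toFun (B ∩ A n) ≤ P.toFun (A n) :=
        P.mono _ (hinter B hB _ (hAmem n)) _ (hAmem n) Set.inter_subset_right
      linarith
    have : Tendsto (fun n => P.toFun (B \ A n) + P.toFun (A n)) atTop (nhds 0) := by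
      simpa using hPdiff0.add hPA0
    exact ge_of_tendsto' this hsplit
  have hPB : P.toFun B = 0 := le_antisymm hPB_le (P.nonneg B)
  have hconstP : Tendsto (fun _ : ℕ => P.toFun B) atTop (nhds 0) := by
    rw [hPB]; exact tendsto_const_nhds
  have hγB0 : Tendsto (fun _ : ℕ => γ B) atTop (nhds 0) :=
    (hcontrol (fun _ => B) (fun _ => hB)).mp hconstP
  have : γ B = 0 := tendsto_nhds_unique tendsto_const_nhds hγB0
  linarith
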